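/- Let P_1, P_2 ∈ ℝ^{n×n} be symmetric positive definite, B, L ∈ ℝ^{n×1}, and Q ∈ ℝ^{n×n} symmetric. Define V(z,e) := z^⊤P_1 z + e^⊤P_2 e and c_4 := 2‖P_1 B‖‖Q‖ / λ_min(P_1)^{3/2} + 4‖P_2(B+L)‖‖Q‖ / (√(λ_min(P_1)) λ_min(P_2)) + 2‖P_2(B+L)‖‖Q‖ / λ_min(P_2)^{3/2}. Then for all z, e ∈ ℝ^n: |2 z^⊤P_1 B (z^⊤Q z) + 4 e^⊤P_2 (B+L) (z^⊤Q e) + 2 e^⊤P_2 (B+L) (e^⊤Q e)| ≤ c_4 · V(z,e)^{3/2}. -/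

import Mathlib

open Matrix
noncomputable section

/-- Spectral norm: operator norm induced by the Euclidean norms. -/
def opNorm {m n : Type*} [Fintype m] [Fintype n] [DecidableEq n] (M : Matrix m n ℝ) : ℝ :=
  ‖(Matrix.toEuclideanLin M).toContinuousLinearMap‖

/-- Euclidean norm of a real vector. -/
def evnorm {n : Type*} [Fintype n] (v : n → ℝ) : ℝ :=
  Real.sqrt (∑ i, (v i) ^ 2)

variable {n : ℕ}
lemma evnorm_eq_norm (v : Fin n → ℝ) :
    evnorm v = ‖(WithLp.equiv 2 (Fin n → ℝ)).symm v‖ := by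
  rw [EuclideanSpace.norm_eq]
  simp [evnorm, Real.norm_eq_abs, sq_abs]

lemma evnorm_nonneg (v : Fin n → ℝ) : 0 ≤ evnorm v := Real.sqrt_nonneg _

lemma dotProduct_eq_inner (v w : Fin n → ℝ) :
    v ⬝ᵥ w = (inner ℝ ((WithLp.equiv 2 (Fin n → ℝ)).symm v)
      ((WithLp.equiv 2 (Fin n → ℝ)).symm w) : ℝ) := by
  simp [PiLp.inner_apply, dotProduct, mul_comm]

lemma abs_dot_le (v w : Fin n → ℝ) : |v ⬝ᵥ w| ≤ evnorm v * evnorm w := by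
  rw [dotProduct_eq_inner, evnorm_eq_norm, evnorm_eq_norm]
  exact abs_real_inner_le_norm _ _

lemma opNorm_nonneg {M : Matrix (Fin n) (Fin n) ℝ} : 0 ≤ opNorm M := norm_nonneg _

lemma evnorm_mulVec_le (M : Matrix (Fin n) (Fin n) ℝ) (v : Fin n → ℝ) :
    evnorm (M *ᵥ v) ≤ opNorm M * evnorm v := by
  rw [evnorm_eq_norm, evnorm_eq_norm]
  show ‖(Matrix.toEuclideanLin M) ((WithLp.equiv 2 (Fin n → ℝ)).symm v)‖ ≤ _
  exact ((Matrix.toEuclideanLin M).toContinuousLinearMap).le_opNorm _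

lemma abs_dot_mulVec_le (M : Matrix (Fin n) (Fin n) ℝ) (v w : Fin n → ℝ) :
    |v ⬝ᵥ (M *ᵥ w)| ≤ evnorm v * (opNorm M * evnorm w) :=
  (abs_dot_le v _).trans (by
    have := evnorm_mulVec_le M w
    have := evnorm_nonneg v
    nlinarith [evnorm_nonneg (M *ᵥ w)])

lemma rayleigh {A : Matrix (Fin n) (Fin n) ℝ} (hA : A.PosDef) (x : Fin n → ℝ) :
    (⨅ i, hA.1.eigenvalues i) * evnorm x ^ 2 ≤ x ⬝ᵥ (A *ᵥ x) := by
  set μ := ⨅ i, hA.1.eigenvalues i with hμ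
  have hbdd : BddBelow (Set.range hA.1.eigenvalues) := Set.Finite.bddBelow (Set.finite_range _)
  have hle : ∀ i, μ ≤ hA.1.eigenvalues i := fun i => ciInf_le hbdd i
  have hps : (A - μ • 1).PosSemidef := by
    have hspec := hA.1.spectral_theorem
    have h1 : A - μ • 1 =
        (hA.1.eigenvectorUnitary : Matrix (Fin n) (Fin n) ℝ) *
          (diagonal (fun i => hA.1.eigenvalues i - μ)) *
          star (hA.1.eigenvectorUnitary : Matrix (Fin n) (Fin n) ℝ) := by
      have hU : (hA.1.eigenvectorUnitary : Matrix (Fin n) (Fin n) ℝ) *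
          star (hA.1.eigenvectorUnitary : Matrix (Fin n) (Fin n) ℝ) = 1 :=
        (Matrix.mem_unitaryGroup_iff).mp hA.1.eigenvectorUnitary.2
      have hd : (diagonal (fun i => hA.1.eigenvalues i - μ)) =
          diagonal (RCLike.ofReal ∘ hA.1.eigenvalues) - μ • 1 := by
        ext i j
        by_cases h : i = j <;>
          simp [h, diagonal_apply, Matrix.sub_apply, Matrix.smul_apply, Matrix.one_apply]
      rw [Unitary.conjStarAlgAut_apply] at hspec
      rw [hd, Matrix.mul_sub, Matrix.sub_mul, ← hspec]
      congr 1
      rw [Matrix.mul_smul, Matrix.smul_mul, mul_one, hU]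
    rw [h1]
    exact (Matrix.posSemidef_diagonal_iff.mpr (fun i => sub_nonneg.mpr (hle i))).mul_mul_conjTranspose_same _
  have := hps.dotProduct_mulVec_nonneg x
  have hx : x ⬝ᵥ ((A - μ • 1) *ᵥ x) = x ⬝ᵥ (A *ᵥ x) - μ * (x ⬝ᵥ x) := by
    rw [Matrix.sub_mulVec, dotProduct_sub]
    congr 1
    rw [Matrix.smul_mulVec, Matrix.one_mulVec, dotProduct_smul, smul_eq_mul]
  have hxx : evnorm x ^ 2 = x ⬝ᵥ x := by
    rw [evnorm, Real.sq_sqrt (by positivity)]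
    simp [dotProduct, pow_two]
  rw [hxx]
  have hst : star x = x := by simp
  rw [hst] at this
  linarith [hx ▸ this]

lemma iInf_eigenvalues_pos {A : Matrix (Fin n) (Fin n) ℝ} (hA : A.PosDef) (hn : 0 < n) :
    0 < ⨅ i, hA.1.eigenvalues i := by
  have : Nonempty (Fin n) := Fin.pos_iff_nonempty.mp hn
  obtain ⟨i, hi⟩ := Finite.exists_min hA.1.eigenvalues
  exact lt_of_lt_of_le (hA.eigenvalues_pos i) (le_ciInf hi)

lemma rpow_three_halves {x : ℝ} (hx : 0 ≤ x) :
    x ^ ((3 : ℝ) / 2) = Real.sqrt x ^ 3 := by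
  rw [show ((3:ℝ)/2) = (1/2 : ℝ) * 3 by norm_num, Real.rpow_mul hx,
    ← Real.sqrt_eq_rpow, ← Real.rpow_natCast (Real.sqrt x) 3]
  norm_num

/-- bound on the higher-order nonlinear terms by `c_4 · V(z,e)^{3/2}`. -/
theorem higher_order_term_bound
    (n : ℕ) (P1 P2 : Matrix (Fin n) (Fin n) ℝ) (hP1 : P1.PosDef) (hP2 : P2.PosDef)
    (B L : Fin n → ℝ) (Q : Matrix (Fin n) (Fin n) ℝ) (hQ : Q.IsSymm)
    (c4 : ℝ)
    (hc4 : c4 =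
      2 * evnorm (P1 *ᵥ B) * opNorm Q / (⨅ i, hP1.1.eigenvalues i) ^ ((3 : ℝ) / 2) +
      4 * evnorm (P2 *ᵥ (B + L)) * opNorm Q /
        (Real.sqrt (⨅ i, hP1.1.eigenvalues i) * (⨅ i, hP2.1.eigenvalues i)) +
      2 * evnorm (P2 *ᵥ (B + L)) * opNorm Q / (⨅ i, hP2.1.eigenvalues i) ^ ((3 : ℝ) / 2)) :
    ∀ z e : Fin n → ℝ,
      |2 * (z ⬝ᵥ (P1 *ᵥ B)) * (z ⬝ᵥ (Q *ᵥ z)) + 4 * (e ⬝ᵥ (P2 *ᵥ (B + L))) * (z ⬝ᵥ (Q *ᵥ e))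
          + 2 * (e ⬝ᵥ (P2 *ᵥ (B + L))) * (e ⬝ᵥ (Q *ᵥ e))| ≤
        c4 * (z ⬝ᵥ (P1 *ᵥ z) + e ⬝ᵥ (P2 *ᵥ e)) ^ ((3 : ℝ) / 2) := by
  intro z e
  rcases Nat.eq_zero_or_pos n with hn | hn
  · subst hn
    simp [dotProduct, Real.zero_rpow (by norm_num : ((3:ℝ)/2) ≠ 0)]
  -- notation
  set μ1 := ⨅ i, hP1.1.eigenvalues i with hμ1def
  set μ2 := ⨅ i, hP2.1.eigenvalues i with hμ2def
  have hμ1 : 0 < μ1 := iInf_eigenvalues_pos hP1 hn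
  have hμ2 : 0 < μ2 := iInf_eigenvalues_pos hP2 hn
  set a := evnorm z with hadef
  set b := evnorm e with hbdef
  set nb := evnorm (P1 *ᵥ B) with hnbdef
  set nc := evnorm (P2 *ᵥ (B + L)) with hncdef
  set q := opNorm Q with hqdef
  have ha : 0 ≤ a := evnorm_nonneg z
  have hb : 0 ≤ b := evnorm_nonneg e
  have hnb : 0 ≤ nb := evnorm_nonneg _
  have hnc : 0 ≤ nc := evnorm_nonneg _
  have hq : 0 ≤ q := opNorm_nonneg
  set V := z ⬝ᵥ (P1 *ᵥ z) + e ⬝ᵥ (P2 *ᵥ e) with hVdef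
  have hr1 : μ1 * a ^ 2 ≤ z ⬝ᵥ (P1 *ᵥ z) := rayleigh hP1 z
  have hr2 : μ2 * b ^ 2 ≤ e ⬝ᵥ (P2 *ᵥ e) := rayleigh hP2 e
  have hV0 : 0 ≤ V := by nlinarith
  set s := Real.sqrt V with hsdef
  have hs : 0 ≤ s := Real.sqrt_nonneg _
  set m1 := Real.sqrt μ1 with hm1def
  set m2 := Real.sqrt μ2 with hm2def
  have hm1 : 0 < m1 := Real.sqrt_pos.mpr hμ1
  have hm2 : 0 < m2 := Real.sqrt_pos.mpr hμ2
  have hm1a : m1 * a ≤ s := by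
    have h1 : m1 * a = Real.sqrt (μ1 * a ^ 2) := by
      rw [Real.sqrt_mul hμ1.le, Real.sqrt_sq ha]
    rw [h1, hsdef]
    exact Real.sqrt_le_sqrt (by nlinarith)
  have hm2b : m2 * b ≤ s := by
    have h1 : m2 * b = Real.sqrt (μ2 * b ^ 2) := by
      rw [Real.sqrt_mul hμ2.le, Real.sqrt_sq hb]
    rw [h1, hsdef]
    exact Real.sqrt_le_sqrt (by nlinarith)
  have has : a ≤ s / m1 := by rw [le_div_iff₀ hm1]; linarith
  have hbs : b ≤ s / m2 := by rw [le_div_iff₀ hm2]; linarith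
  -- rewrite the RHS
  have hVs : V ^ ((3:ℝ)/2) = s ^ 3 := rpow_three_halves hV0
  have hμ1s : μ1 ^ ((3:ℝ)/2) = m1 ^ 3 := rpow_three_halves hμ1.le
  have hμ2s : μ2 ^ ((3:ℝ)/2) = m2 ^ 3 := rpow_three_halves hμ2.le
  have hμ2m : μ2 = m2 ^ 2 := (Real.sq_sqrt hμ2.le).symm
  rw [hc4, hVs, hμ1s, hμ2s, hμ2m]
  -- abs bounds on the individual factors
  have h1 : |z ⬝ᵥ (P1 *ᵥ B)| ≤ a * nb := abs_dot_le z _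
  have h3 : |e ⬝ᵥ (P2 *ᵥ (B + L))| ≤ b * nc := abs_dot_le e _
  have h2 : |z ⬝ᵥ (Q *ᵥ z)| ≤ a * (q * a) := abs_dot_mulVec_le Q z z
  have h4 : |z ⬝ᵥ (Q *ᵥ e)| ≤ a * (q * b) := abs_dot_mulVec_le Q z e
  have h5 : |e ⬝ᵥ (Q *ᵥ e)| ≤ b * (q * b) := abs_dot_mulVec_le Q e e
  have t1 : |2 * (z ⬝ᵥ (P1 *ᵥ B)) * (z ⬝ᵥ (Q *ᵥ z))| ≤ 2 * ((a * nb) * (a * (q * a))) := by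
    rw [abs_mul, abs_mul, abs_two, mul_assoc]
    have := mul_le_mul h1 h2 (abs_nonneg _) (mul_nonneg ha hnb)
    linarith
  have t2 : |4 * (e ⬝ᵥ (P2 *ᵥ (B + L))) * (z ⬝ᵥ (Q *ᵥ e))| ≤ 4 * ((b * nc) * (a * (q * b))) := by
    rw [abs_mul, abs_mul]
    have h40 : |(4:ℝ)| = 4 := by norm_num
    rw [h40, mul_assoc]
    have := mul_le_mul h3 h4 (abs_nonneg _) (mul_nonneg hb hnc)
    linarith
  have t3 : |2 * (e ⬝ᵥ (P2 *ᵥ (B + L))) * (e ⬝ᵥ (Q *ᵥ e))| ≤ 2 * ((b * nc) * (b * (q * b))) := by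
    rw [abs_mul, abs_mul, abs_two, mul_assoc]
    have := mul_le_mul h3 h5 (abs_nonneg _) (mul_nonneg hb hnc)
    linarith
  have ha3 : a ^ 3 ≤ (s / m1) ^ 3 := pow_le_pow_left₀ ha has 3
  have hb3 : b ^ 3 ≤ (s / m2) ^ 3 := pow_le_pow_left₀ hb hbs 3
  have hab : a * b ^ 2 ≤ (s / m1) * (s / m2) ^ 2 := by
    have hb2 : b ^ 2 ≤ (s / m2) ^ 2 := pow_le_pow_left₀ hb hbs 2
    exact mul_le_mul has hb2 (sq_nonneg b) (div_nonneg hs hm1.le)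
  calc |2 * (z ⬝ᵥ (P1 *ᵥ B)) * (z ⬝ᵥ (Q *ᵥ z)) + 4 * (e ⬝ᵥ (P2 *ᵥ (B + L))) * (z ⬝ᵥ (Q *ᵥ e))
          + 2 * (e ⬝ᵥ (P2 *ᵥ (B + L))) * (e ⬝ᵥ (Q *ᵥ e))|
      ≤ |2 * (z ⬝ᵥ (P1 *ᵥ B)) * (z ⬝ᵥ (Q *ᵥ z))| + |4 * (e ⬝ᵥ (P2 *ᵥ (B + L))) * (z ⬝ᵥ (Q *ᵥ e))|
          + |2 * (e ⬝ᵥ (P2 *ᵥ (B + L))) * (e ⬝ᵥ (Q *ᵥ e))| := abs_add_three _ _ _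
    _ ≤ 2 * ((a * nb) * (a * (q * a))) + 4 * ((b * nc) * (a * (q * b)))
          + 2 * ((b * nc) * (b * (q * b))) := by linarith
    _ = 2 * nb * q * a ^ 3 + 4 * nc * q * (a * b ^ 2) + 2 * nc * q * b ^ 3 := by ring
    _ ≤ 2 * nb * q * (s / m1) ^ 3 + 4 * nc * q * ((s / m1) * (s / m2) ^ 2)
          + 2 * nc * q * (s / m2) ^ 3 := by
        gcongr
    _ = (2 * nb * q / m1 ^ 3 + 4 * nc * q / (m1 * m2 ^ 2) + 2 * nc * q / m2 ^ 3) * s ^ 3 := by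
        ring
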